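/- arXiv:1305.7347 — 2 statements merged into one kernel-verified Lean document; each statement's English description precedes it below -/
import Mathlib

section
/- Let K ≤ 0, let a : I → ℝ be a twice differentiable positive function on an interval I, let ρ, P : I → ℝ satisfy ρ(t) ≥ 3P(t) ≥ 0 and the Friedmann equations 3(a'(t)² + K)/a(t)² = 8π ρ(t) and 2a''(t)/a(t) + (a'(t)² + K)/a(t)² = -8π P(t) on I, and set H = a'/a. Then at every t ∈ I with H(t) ≠ 0 one has 1 ≤ -H'(t)/H(t)² ≤ 2, i.e. H(t)² ≤ -H'(t) ≤ 2 H(t)². -/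
open Real

/-- For `K ≤ 0` and a positive twice differentiable scale factor `a` on an interval `I`
satisfying the Friedmann equations with energy condition `ρ ≥ 3P ≥ 0`, at every point of `I`
where the Hubble parameter `H = a'/a` does not vanish, the derivative `H'` of `H`
(within `I`) satisfies `H² ≤ -H' ≤ 2H²`, i.e. `1 ≤ -H'/H² ≤ 2`. -/
theorem friedmann_deceleration_bounds
    (K : ℝ) (hK : K ≤ 0) (I : Set ℝ) (hI : I.OrdConnected)
    (a a' a'' ρ P : ℝ → ℝ)
    (ha : ∀ t ∈ I, HasDerivWithinAt a (a' t) I t)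
    (ha' : ∀ t ∈ I, HasDerivWithinAt a' (a'' t) I t)
    (hpos : ∀ t ∈ I, 0 < a t)
    (hec : ∀ t ∈ I, 3 * P t ≤ ρ t ∧ 0 ≤ P t)
    (hF1 : ∀ t ∈ I, 3 * ((a' t) ^ 2 + K) / (a t) ^ 2 = 8 * π * ρ t)
    (hF2 : ∀ t ∈ I, 2 * a'' t / a t + ((a' t) ^ 2 + K) / (a t) ^ 2 = -(8 * π * P t)) :
    ∀ t ∈ I, a' t / a t ≠ 0 →
      ∃ d : ℝ, HasDerivWithinAt (fun s => a' s / a s) d I t ∧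
        (a' t / a t) ^ 2 ≤ -d ∧ -d ≤ 2 * (a' t / a t) ^ 2 := by
  intro t ht hH
  have hA := hpos t ht
  have hAne : a t ≠ 0 := ne_of_gt hA
  refine ⟨(a'' t * a t - a' t * a' t) / (a t) ^ 2,
    (ha' t ht).div (ha t ht) hAne, ?_, ?_⟩
  · have eq1 := hF1 t ht
    have eq2 := hF2 t ht
    obtain ⟨hec1, hec2⟩ := hec t ht
    have hpi : (0:ℝ) < π := Real.pi_pos
    field_simp at eq1 eq2 ⊢
    nlinarith [sq_nonneg (a t), sq_nonneg (a' t), mul_pos hA hA,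
      mul_nonneg (mul_nonneg hpi.le hec2) (sq_nonneg (a t)),
      mul_nonneg (mul_nonneg hpi.le (by linarith : (0:ℝ) ≤ ρ t)) (sq_nonneg (a t))]
  · have eq1 := hF1 t ht
    have eq2 := hF2 t ht
    obtain ⟨hec1, hec2⟩ := hec t ht
    have hpi : (0:ℝ) < π := Real.pi_pos
    field_simp at eq1 eq2 ⊢
    nlinarith [mul_pos hA hA, sq_nonneg (a t),
      mul_nonneg (mul_nonneg hpi.le (by linarith : (0:ℝ) ≤ ρ t - 3 * P t)) (sq_nonneg (a t)),
      mul_nonneg (neg_nonneg.2 hK) (sq_nonneg (a t))]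
end

section
/- Let a : [t₀, ∞) → ℝ be a twice differentiable positive function and let ρ, P : [t₀, ∞) → ℝ satisfy ρ(t) ≥ 3P(t) ≥ 0 and the Friedmann equations with curvature parameter K = 1, namely 3(a'(t)² + 1)/a(t)² = 8π ρ(t) and 2a''(t)/a(t) + (a'(t)² + 1)/a(t)² = -8π P(t), for all t ≥ t₀. Set H = a'/a and suppose H(t₀) > 0. Then there exists t_c ≥ t₀ with H(t_c) = 0; i.e. the Hubble parameter of a closed (K = 1) Friedmann model cannot remain positive for all time. -/
open Real

/-- If `f` has nonpositive derivative on `Ici t₀`, it is antitone there. -/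
lemma antitoneOn_aux {t₀ : ℝ} {f f' : ℝ → ℝ}
    (hf : ∀ t ∈ Set.Ici t₀, HasDerivWithinAt f (f' t) (Set.Ici t₀) t)
    (hf' : ∀ t ∈ Set.Ici t₀, f' t ≤ 0) :
    AntitoneOn f (Set.Ici t₀) := by
  apply antitoneOn_of_deriv_nonpos (convex_Ici t₀)
    (fun t ht => (hf t ht).continuousWithinAt)
  · intro x hx
    rw [interior_Ici] at hx
    exact ((hf x (Set.mem_Ici.mpr (le_of_lt hx))).hasDerivAt
      (Ici_mem_nhds hx)).differentiableAt.differentiableWithinAt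
  · intro x hx
    rw [interior_Ici] at hx
    rw [((hf x (Set.mem_Ici.mpr (le_of_lt hx))).hasDerivAt (Ici_mem_nhds hx)).deriv]
    exact hf' x (Set.mem_Ici.mpr (le_of_lt hx))

/-- In a closed (`K = 1`) Friedmann model with matter satisfying `ρ ≥ 3P ≥ 0`,
the Hubble parameter `H = a'/a` cannot remain positive for all time: if `H(t₀) > 0`
then there is some `t_c ≥ t₀` with `H(t_c) = 0`. -/
theorem closed_friedmann_hubble_vanishes
    (t₀ : ℝ) (a a' a'' ρ P : ℝ → ℝ)
    (ha : ∀ t ∈ Set.Ici t₀, HasDerivWithinAt a (a' t) (Set.Ici t₀) t)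
    (ha' : ∀ t ∈ Set.Ici t₀, HasDerivWithinAt a' (a'' t) (Set.Ici t₀) t)
    (hpos : ∀ t ∈ Set.Ici t₀, 0 < a t)
    (hec : ∀ t ∈ Set.Ici t₀, 3 * P t ≤ ρ t ∧ 0 ≤ P t)
    (hF1 : ∀ t ∈ Set.Ici t₀, 3 * ((a' t) ^ 2 + 1) / (a t) ^ 2 = 8 * π * ρ t)
    (hF2 : ∀ t ∈ Set.Ici t₀,
      2 * a'' t / a t + ((a' t) ^ 2 + 1) / (a t) ^ 2 = -(8 * π * P t))
    (hH0 : 0 < a' t₀ / a t₀) :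
    ∃ tc, t₀ ≤ tc ∧ a' tc / a tc = 0 := by
  by_contra hcon
  push_neg at hcon
  have ha0 : 0 < a t₀ := hpos t₀ Set.self_mem_Ici
  have hne : ∀ t, t₀ ≤ t → a' t ≠ 0 := by
    intro t ht h0
    exact hcon t ht (by rw [h0, zero_div])
  have ha'0 : 0 < a' t₀ := by
    have := mul_pos hH0 ha0
    rwa [div_mul_cancel₀ _ (ne_of_gt ha0)] at this
  have hcont : ContinuousOn a' (Set.Ici t₀) :=
    fun t ht => (ha' t ht).continuousWithinAt
  -- a' stays positive
  have hpos' : ∀ t, t₀ ≤ t → 0 < a' t := by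
    intro t ht
    by_contra hle
    push_neg at hle
    have hlt : a' t < 0 := lt_of_le_of_ne hle (hne t ht)
    obtain ⟨c, hc, hc0⟩ := intermediate_value_Icc' ht
      (hcont.mono (Set.Icc_subset_Ici_self))
      (Set.mem_Icc.mpr ⟨hlt.le, ha'0.le⟩)
    exact hne c hc.1 hc0
  -- key: 2 a a'' ≤ -(a'² + 1)
  have hkey : ∀ t, t₀ ≤ t → a'' t * (2 * a t) ≤ -((a' t) ^ 2 + 1) := by
    intro t ht
    have h2 := hF2 t ht
    have hP := (hec t ht).2
    have hat := hpos t ht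
    have hπP : 0 ≤ 8 * π * P t := by positivity
    have hane : a t ≠ 0 := ne_of_gt hat
    field_simp at h2
    nlinarith [mul_nonneg hπP (sq_nonneg (a t)), sq_nonneg (a t)]
  -- g = a (a'² + 1) is antitone
  set C := a t₀ * ((a' t₀) ^ 2 + 1) with hC
  have hCpos : 0 < C := by positivity
  have hg : AntitoneOn (fun t => a t * ((a' t) ^ 2 + 1)) (Set.Ici t₀) := by
    apply antitoneOn_aux (f' := fun t =>
      a' t * ((a' t) ^ 2 + 1) + a t * (2 * (a' t) ^ 1 * a'' t))
    · intro t ht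
      exact (ha t ht).mul (((ha' t ht).pow 2).add_const 1)
    · intro t ht
      have h1 := hkey t ht
      have h2 := (hpos' t ht).le
      have h3 := (hpos t ht).le
      nlinarith [mul_le_mul_of_nonneg_left h1 h2]
  -- hence a is bounded by C
  have haC : ∀ t, t₀ ≤ t → a t ≤ C := by
    intro t ht
    have := hg Set.self_mem_Ici ht ht
    simp only at this
    nlinarith [hpos t ht, sq_nonneg (a' t)]
  -- hence a'' (2C) ≤ -1
  have hkey2 : ∀ t, t₀ ≤ t → a'' t * (2 * C) + 1 ≤ 0 := by
    intro t ht
    have h1 := hkey t ht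
    have h2 := hpos t ht
    have h3 := haC t ht
    have ha''neg : a'' t < 0 := by nlinarith [sq_nonneg (a' t)]
    nlinarith [sq_nonneg (a' t)]
  -- f = a' * 2C + t is antitone
  have hf : AntitoneOn (fun t => a' t * (2 * C) + t) (Set.Ici t₀) := by
    apply antitoneOn_aux (f' := fun t => a'' t * (2 * C) + 1)
    · intro t ht
      exact ((ha' t ht).mul_const _).add (hasDerivWithinAt_id t _)
    · exact fun t ht => hkey2 t ht
  -- evaluate at large time
  set T := t₀ + 2 * C * a' t₀ + 1 with hT
  have hTge : t₀ ≤ T := by nlinarith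
  have := hf Set.self_mem_Ici hTge hTge
  have hT' := hpos' T hTge
  simp only at this
  nlinarith
end
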